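/- The class of real-valued Baire-one functions on a topological space X is closed under uniformly convergent series: if g_n : X → ℝ are Baire-one with |g_n(x)| ≤ 2^{-n+1} for all x and n, then g(x) = Σ_{n=1}^∞ g_n(x) defines a Baire-one function on X. -/

import Mathlib

open Set Filter Topology

/-- A map is Baire-one if it is a pointwise limit of continuous maps. -/
def BaireOne {X Y : Type*} [TopologicalSpace X] [TopologicalSpace Y] (f : X → Y) : Prop :=
  ∃ g : ℕ → X → Y, (∀ n, Continuous (g n)) ∧
    ∀ x, Filter.Tendsto (fun n => g n x) Filter.atTop (nhds (f x))

/-- A regular transfinite sequence of open sets in `X`. -/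
def RegularSeq {X : Type*} [TopologicalSpace X] (α : Ordinal.{0}) (U : Ordinal.{0} → Set X) : Prop :=
  (∀ ξ, ξ ≤ α → IsOpen (U ξ)) ∧ U 0 = ∅ ∧ U α = Set.univ ∧
  (∀ ξ η, ξ ≤ η → η ≤ α → U ξ ⊆ U η) ∧
  (∀ γ, γ ≤ α → Order.IsSuccLimit γ → U γ = ⋃ ξ < γ, U ξ)

/-- A functionally open set: the preimage of `(0,1]` under a continuous map to `[0,1]`. -/
def FunctionallyOpen {X : Type*} [TopologicalSpace X] (U : Set X) : Prop :=
  ∃ φ : X → ℝ, Continuous φ ∧ (∀ x, φ x ∈ Set.Icc (0:ℝ) 1) ∧ U = φ ⁻¹' Set.Ioc (0:ℝ) 1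

/-- A map is functionally countably fragmented. -/
def FunctCountFrag {X Y : Type*} [TopologicalSpace X] [MetricSpace Y] (f : X → Y) : Prop :=
  ∀ ε : ℝ, 0 < ε → ∃ (α : Ordinal.{0}) (U : Ordinal.{0} → Set X),
    α.card ≤ Cardinal.aleph0 ∧ RegularSeq α U ∧ (∀ ξ, ξ ≤ α → FunctionallyOpen (U ξ)) ∧
    ∀ ξ, ξ < α → Metric.diam (f '' (U (ξ + 1) \ U ξ)) < ε

theorem stmt6 {X : Type*} [TopologicalSpace X] (g : ℕ → X → ℝ) (hg : ∀ n, BaireOne (g n))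
    (hb : ∀ n x, |g n x| ≤ 2 * (1 / 2) ^ n) :
    BaireOne (fun x => ∑' n, g n x) := by
  choose f hfc hft using hg
  set c : ℕ → ℝ := fun n => 2 * (1 / 2) ^ n with hc
  have hcpos : ∀ n, 0 < c n := fun n => by positivity
  -- clamped approximants
  set F : ℕ → ℕ → X → ℝ := fun n k x => max (-(c n)) (min (f n k x) (c n)) with hF
  have hFcont : ∀ n k, Continuous (F n k) := fun n k =>
    continuous_const.max ((hfc n k).min continuous_const)
  have hFbd : ∀ n k x, |F n k x| ≤ c n := by
    intro n k x
    rw [abs_le]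
    constructor
    · exact le_max_left _ _
    · exact max_le (by linarith [hcpos n]) (min_le_right _ _)
  have hFt : ∀ n x, Tendsto (fun k => F n k x) atTop (nhds (g n x)) := by
    intro n x
    have h1 : Tendsto (fun k => F n k x) atTop
        (nhds (max (-(c n)) (min (g n x) (c n)))) :=
      tendsto_const_nhds.max ((hft n x).min tendsto_const_nhds)
    have h2 : max (-(c n)) (min (g n x) (c n)) = g n x := by
      have := abs_le.mp (hb n x)
      rw [min_eq_left this.2, max_eq_right this.1]
    rwa [h2] at h1
  -- the diagonal-ish sums
  set G : ℕ → X → ℝ := fun k x => ∑' n, if n ≤ k then F n k x else 0 with hG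
  have hGsum : ∀ k x, G k x = ∑ n ∈ Finset.range (k + 1), F n k x := by
    intro k x
    rw [hG]
    simp only
    rw [tsum_eq_sum (s := Finset.range (k + 1))]
    · apply Finset.sum_congr rfl
      intro n hn
      rw [if_pos (Nat.lt_succ_iff.mp (Finset.mem_range.mp hn))]
    · intro n hn
      rw [if_neg (by simpa [Nat.lt_succ_iff] using hn)]
  refine ⟨G, ?_, ?_⟩
  · intro k
    have : G k = fun x => ∑ n ∈ Finset.range (k + 1), F n k x := funext (hGsum k)
    rw [this]
    exact continuous_finset_sum _ fun n _ => hFcont n k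
  · intro x
    apply tendsto_tsum_of_dominated_convergence (bound := c)
    · exact (summable_geometric_of_lt_one (by norm_num) (by norm_num)).mul_left 2
    · intro n
      have : ∀ᶠ k in atTop, (if n ≤ k then F n k x else 0) = F n k x := by
        filter_upwards [eventually_ge_atTop n] with k hk
        rw [if_pos hk]
      exact (hFt n x).congr' (this.mono fun k hk => hk.symm)
    · filter_upwards with k n
      by_cases h : n ≤ k
      · simpa [h] using hFbd n k x
      · simp [h, le_of_lt (hcpos n)]
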